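/- Under the one-factor model Σ = σ²ββᵀ + Δ with β₁ ≤ ⋯ ≤ β_p, δ_i² > 0, σ² > 0 and Σ_{j=1}^p β_j/δ_j² ≥ 0, let w^L be the LOMV solution with active set K and k = |K|. Then exactly one of the following holds: either K = {1,…,p} and the unconstrained fully invested minimum variance solution w^{LS} = Σ⁻¹1_p/(1_pᵀΣ⁻¹1_p) is already long-only and equals w^L; or K ≠ {1,…,p}, in which case Σ_{j=1}^k β_j/δ_j² > 0 and for every index i, w^L_i > 0 if and only if β_i < (1/σ² + Σ_{j=1}^k β_j²/δ_j²) / (Σ_{j=1}^k β_j/δ_j²). -/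

import Mathlib

open Matrix Finset

set_option maxHeartbeats 1000000 in
/-- **Corollary: beta threshold dichotomy.** Under the one-factor model
with ordered betas, positive idiosyncratic variances and `∑ βⱼ/δⱼ² ≥ 0`, either the
active set of the LOMV solution is all of `{1,…,p}` and the unconstrained long-short
solution `Σ⁻¹1/(1ᵀΣ⁻¹1)` is already long-only and equals `w`; or else the active set
is proper, `∑_{j≤k} βⱼ/δⱼ² > 0`, and `wᵢ > 0` iff
`βᵢ < (1/σ² + ∑_{j≤k} βⱼ²/δⱼ²)/(∑_{j≤k} βⱼ/δⱼ²)`, where `k` is the number of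
active assets. -/
theorem lomv_beta_threshold_dichotomy {p : ℕ} (hp : 0 < p)
    (σsq : ℝ) (hσ : 0 < σsq)
    (β δsq : Fin p → ℝ) (hδ : ∀ i, 0 < δsq i)
    (hmono : Monotone β)
    (hsign : 0 ≤ ∑ j, β j / δsq j)
    (S : Matrix (Fin p) (Fin p) ℝ)
    (hS : S = σsq • Matrix.vecMulVec β β + Matrix.diagonal δsq)
    -- w is the (unique) LOMV solution for S
    (w : Fin p → ℝ)
    (hsum : ∑ i, w i = 1)
    (hnonneg : ∀ i, 0 ≤ w i)
    (hmin : ∀ v : Fin p → ℝ, (∑ i, v i = 1) → (∀ i, 0 ≤ v i) →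
      ∑ i, ∑ j, w i * S i j * w j ≤ ∑ i, ∑ j, v i * S i j * v j)
    -- K is the active set and k = |K|
    (K : Finset (Fin p)) (hK : ∀ i, i ∈ K ↔ 0 < w i)
    (k : ℕ) (hk : k = K.card) :
    -- Case 1: every asset is active and w coincides with the long-short GMV portfolio
    (K = Finset.univ ∧
      ∀ i, w i = (S⁻¹ *ᵥ (fun _ => (1 : ℝ))) i / ∑ j, (S⁻¹ *ᵥ (fun _ => (1 : ℝ))) j)
    -- Case 2: the active set is proper, C_K > 0, and the beta threshold holds
    ∨ (K ≠ Finset.univ ∧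
      0 < ∑ j ∈ Finset.univ.filter (fun j : Fin p => (j : ℕ) < k), β j / δsq j ∧
      ∀ i, (0 < w i ↔
        β i < (1 / σsq +
            ∑ j ∈ Finset.univ.filter (fun j : Fin p => (j : ℕ) < k), β j ^ 2 / δsq j)
          / ∑ j ∈ Finset.univ.filter (fun j : Fin p => (j : ℕ) < k), β j / δsq j)) := by
  classical
  -- entries of S
  have hSe : ∀ i j, S i j = σsq * (β i * β j) + (if i = j then δsq i else 0) := by
    intro i j
    rw [hS]
    simp [Matrix.add_apply, Matrix.smul_apply, Matrix.vecMulVec_apply,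
      Matrix.diagonal_apply, smul_eq_mul]
  have hSsymm : ∀ i j, S i j = S j i := by
    intro i j
    rw [hSe, hSe]
    by_cases h : i = j
    · subst h; ring
    · rw [if_neg h, if_neg (Ne.symm h)]; ring
  set b : ℝ := ∑ j, β j * w j with hbdef
  set a : Fin p → ℝ := fun i => σsq * β i * b + δsq i * w i with hadef
  clear_value b
  -- a i is (S *ᵥ w) i
  have ha : ∀ i, (∑ j, S i j * w j) = a i := by
    intro i
    have : ∀ j, S i j * w j = σsq * β i * (β j * w j) + (if i = j then δsq i * w j else 0) := by
      intro j
      rw [hSe]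
      by_cases h : i = j <;> simp [h] <;> ring
    rw [Finset.sum_congr rfl fun j _ => this j, Finset.sum_add_distrib, ← Finset.mul_sum]
    simp [hadef, hbdef]
  -- the quadratic form
  set Qf : (Fin p → ℝ) → ℝ := fun u => ∑ i, ∑ j, u i * S i j * u j with hQf
  clear_value a
  have expand : ∀ v : Fin p → ℝ,
      Qf (fun t => w t + v t) = Qf w + 2 * (∑ s, v s * a s) + Qf v := by
    intro v
    have e1 : Qf (fun t => w t + v t)
        = Qf w + (∑ i, ∑ j, w i * S i j * v j) + ((∑ i, ∑ j, v i * S i j * w j) + Qf v) := by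
      simp only [hQf, ← Finset.sum_add_distrib]
      refine Finset.sum_congr rfl fun i _ => Finset.sum_congr rfl fun j _ => ?_
      ring
    have e2 : (∑ i, ∑ j, w i * S i j * v j) = ∑ i, ∑ j, v i * S i j * w j := by
      rw [Finset.sum_comm]
      refine Finset.sum_congr rfl fun i _ => Finset.sum_congr rfl fun j _ => ?_
      rw [hSsymm j i]; ring
    have e3 : (∑ i, ∑ j, v i * S i j * w j) = ∑ s, v s * a s := by
      refine Finset.sum_congr rfl fun i _ => ?_
      rw [← ha i, Finset.mul_sum]
      refine Finset.sum_congr rfl fun j _ => ?_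
      ring
    rw [e1, e2, e3]; ring
  -- KKT: on the active set a is minimal
  have kkt : ∀ i j : Fin p, 0 < w i → a i ≤ a j := by
    intro i j hwi
    by_cases hij : i = j
    · subst hij; exact le_refl _
    by_contra hlt
    push_neg at hlt
    set d : Fin p → ℝ := fun t => (if t = j then (1:ℝ) else 0) - (if t = i then 1 else 0) with hd
    set q : ℝ := Qf d with hq
    set ε : ℝ := min (w i) ((a i - a j) / (|q| + 1)) with hε
    have hqpos : (0:ℝ) < |q| + 1 := by positivity
    have hεpos : 0 < ε := by
      apply lt_min hwi
      apply div_pos (by linarith) hqpos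
    have hεwi : ε ≤ w i := min_le_left _ _
    have hεq : ε ≤ (a i - a j) / (|q| + 1) := min_le_right _ _
    set v : Fin p → ℝ := fun t => w t + ε * d t with hv
    have hvsum : ∑ t, v t = 1 := by
      simp only [hv, hd]
      rw [Finset.sum_add_distrib, hsum, ← Finset.mul_sum]
      rw [Finset.sum_sub_distrib]
      simp [Finset.sum_ite_eq']
    have hji : j ≠ i := fun hh => hij hh.symm
    have hvnn : ∀ t, 0 ≤ v t := by
      intro t
      simp only [hv, hd]
      by_cases h1 : t = j
      · subst h1
        rw [if_pos rfl, if_neg hji]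
        nlinarith [hnonneg t]
      · by_cases h2 : t = i
        · subst h2
          rw [if_neg h1, if_pos rfl]
          have : w t + ε * (0 - 1) = w t - ε := by ring
          rw [this]
          linarith
        · rw [if_neg h1, if_neg h2]
          have : w t + ε * (0 - 0) = w t := by ring
          rw [this]
          exact hnonneg t
    have hda : (∑ s, (ε * d s) * a s) = ε * (a j - a i) := by
      have h0 : ∀ s, (ε * d s) * a s = ε * (d s * a s) := fun s => by ring
      rw [Finset.sum_congr rfl fun s _ => h0 s, ← Finset.mul_sum]
      congr 1
      simp only [hd, sub_mul, Finset.sum_sub_distrib, ite_mul, one_mul, zero_mul]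
      simp [Finset.sum_ite_eq']
    have hdq : Qf (fun t => ε * d t) = ε^2 * q := by
      simp only [hQf, hq]
      rw [Finset.mul_sum]
      refine Finset.sum_congr rfl fun s _ => ?_
      rw [Finset.mul_sum]
      refine Finset.sum_congr rfl fun t _ => ?_
      ring
    have hQv : Qf v = Qf w + 2 * (ε * (a j - a i)) + ε^2 * q := by
      have := expand (fun t => ε * d t)
      rw [hda, hdq] at this
      exact this
    have hle : Qf w ≤ Qf v := by
      have h6 := hmin v hvsum hvnn
      rw [hQf]
      exact h6
    rw [hQv] at hle
    have h1 : 0 ≤ 2 * (a j - a i) + ε * q := by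
      have : 0 ≤ ε * (2 * (a j - a i) + ε * q) := by nlinarith
      nlinarith
    have h2 : ε * q ≤ ε * |q| := by
      apply mul_le_mul_of_nonneg_left (le_abs_self q) (le_of_lt hεpos)
    have h3 : ε * |q| < a i - a j := by
      calc ε * |q| ≤ ((a i - a j) / (|q| + 1)) * |q| := by
            apply mul_le_mul_of_nonneg_right hεq (abs_nonneg q)
        _ < a i - a j := by
            rw [div_mul_eq_mul_div, div_lt_iff₀ hqpos]
            nlinarith [abs_nonneg q]
    linarith
  -- there is an active index
  obtain ⟨i₀, hi₀⟩ : ∃ i, 0 < w i := by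
    by_contra h
    push_neg at h
    have : ∀ i, w i = 0 := fun i => le_antisymm (h i) (hnonneg i)
    simp [this] at hsum
  set lam : ℝ := a i₀ with hlam
  clear_value Qf
  have hlam_active : ∀ i, 0 < w i → a i = lam := by
    intro i hi
    rw [hlam]
    exact le_antisymm (kkt i i₀ hi) (kkt i₀ i hi₀)
  have hlam_le : ∀ j, lam ≤ a j := by
    intro j
    rw [hlam]
    exact kkt i₀ j hi₀
  clear_value lam
  -- positivity of lam
  have hlam_pos : 0 < lam := by
    have : lam = ∑ i, w i * a i := by
      have : ∀ i, w i * a i = w i * lam := by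
        intro i
        rcases lt_or_eq_of_le (hnonneg i) with h | h
        · rw [hlam_active i h]
        · rw [← h]; ring
      rw [Finset.sum_congr rfl fun i _ => this i, ← Finset.sum_mul, hsum, one_mul]
    rw [this]
    have hexp : ∑ i, w i * a i = σsq * b^2 + ∑ i, δsq i * (w i)^2 := by
      simp only [hadef]
      have : ∀ i, w i * (σsq * β i * b + δsq i * w i)
          = σsq * b * (β i * w i) + δsq i * (w i)^2 := by intro i; ring
      rw [Finset.sum_congr rfl fun i _ => this i, Finset.sum_add_distrib, ← Finset.mul_sum,
        ← hbdef]
      ring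
    rw [hexp]
    have h1 : 0 ≤ σsq * b^2 := mul_nonneg hσ.le (sq_nonneg b)
    have h2 : δsq i₀ * (w i₀)^2 ≤ ∑ i, δsq i * (w i)^2 := by
      apply Finset.single_le_sum (f := fun i => δsq i * (w i)^2)
      · intro i _; exact mul_nonneg (hδ i).le (sq_nonneg _)
      · exact Finset.mem_univ i₀
    have h3 : 0 < δsq i₀ * (w i₀)^2 := mul_pos (hδ i₀) (pow_pos hi₀ 2)
    linarith
  -- key characterization
  have hiff : ∀ i, 0 < w i ↔ σsq * β i * b < lam := by
    intro i
    constructor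
    · intro hi
      have := hlam_active i hi
      simp only [hadef] at this
      nlinarith [hδ i]
    · intro hi
      by_contra h
      push_neg at h
      have hwi0 : w i = 0 := le_antisymm h (hnonneg i)
      have := hlam_le i
      simp only [hadef, hwi0] at this
      nlinarith
  by_cases hKU : K = Finset.univ
  · -- Case 1
    left
    refine ⟨hKU, ?_⟩
    have hwpos : ∀ i, 0 < w i := by
      intro i
      rw [← hK i, hKU]
      exact Finset.mem_univ i
    have haeq : ∀ i, a i = lam := fun i => hlam_active i (hwpos i)
    -- S *ᵥ ((1/lam) • w) = 1
    have hmul : S *ᵥ (fun t => (1/lam) * w t) = fun _ => (1:ℝ) := by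
      funext i
      simp only [Matrix.mulVec, dotProduct]
      have : ∀ j, S i j * ((1/lam) * w j) = (1/lam) * (S i j * w j) := by intro j; ring
      rw [Finset.sum_congr rfl fun j _ => this j, ← Finset.mul_sum, ha i, haeq i]
      field_simp [hlam_pos.ne']
    have hPD : S.PosDef := by
      rw [Matrix.posDef_iff_dotProduct_mulVec]
      constructor
      · show Sᴴ = S
        ext i j
        rw [Matrix.conjTranspose_apply, star_trivial]
        exact hSsymm j i
      · intro x hx
        have hx' : ∃ i, x i ≠ 0 := by
          by_contra h
          push_neg at h
          exact hx (funext h)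
        obtain ⟨i₁, hi₁⟩ := hx'
        have key : ∑ i, x i * (∑ j, S i j * x j)
            = σsq * (∑ j, β j * x j)^2 + ∑ i, δsq i * (x i)^2 := by
          have h2 : ∀ i, x i * (∑ j, S i j * x j)
              = σsq * (β i * x i) * (∑ j, β j * x j) + δsq i * (x i)^2 := by
            intro i
            have h1 : ∀ j, S i j * x j = σsq * β i * (β j * x j) + (if i = j then δsq i * x j else 0) := by
              intro j
              rw [hSe]
              by_cases h : i = j <;> simp [h] <;> ring
            rw [Finset.sum_congr rfl fun j _ => h1 j, Finset.sum_add_distrib, ← Finset.mul_sum]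
            simp
            ring
          rw [Finset.sum_congr rfl fun i _ => h2 i, Finset.sum_add_distrib, ← Finset.sum_mul]
          have hpull : ∑ i, σsq * (β i * x i) = σsq * ∑ j, β j * x j := by
            rw [Finset.mul_sum]
          rw [hpull]
          ring
        have hgoal : (star x) ⬝ᵥ (S *ᵥ x) = ∑ i, x i * (∑ j, S i j * x j) := by
          simp only [dotProduct, Matrix.mulVec, Pi.star_apply, star_trivial]
        rw [hgoal, key]
        have h1 : 0 ≤ σsq * (∑ j, β j * x j)^2 := mul_nonneg hσ.le (sq_nonneg _)
        have h2 : δsq i₁ * (x i₁)^2 ≤ ∑ i, δsq i * (x i)^2 := by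
          apply Finset.single_le_sum (f := fun i => δsq i * (x i)^2)
          · intro i _; exact mul_nonneg (hδ i).le (sq_nonneg _)
          · exact Finset.mem_univ i₁
        have h3 : 0 < δsq i₁ * (x i₁)^2 :=
          mul_pos (hδ i₁) (by positivity)
        linarith
    have hUnit : IsUnit S.det := by
      rw [← Matrix.isUnit_iff_isUnit_det]
      exact hPD.isUnit
    have hinv : S⁻¹ *ᵥ (fun _ => (1:ℝ)) = fun t => (1/lam) * w t := by
      rw [← hmul, Matrix.mulVec_mulVec, Matrix.nonsing_inv_mul S hUnit, Matrix.one_mulVec]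
    intro i
    rw [hinv]
    have hsum' : ∑ j, (1/lam) * w j = 1/lam := by
      rw [← Finset.mul_sum, hsum, mul_one]
    rw [hsum']
    field_simp [hlam_pos.ne']
  · -- Case 2
    right
    refine ⟨hKU, ?_⟩
    -- an inactive index
    obtain ⟨i₁, hi₁⟩ : ∃ i, w i = 0 := by
      have : ∃ i, i ∉ K := by
        by_contra h
        push_neg at h
        exact hKU (Finset.eq_univ_iff_forall.mpr h)
      obtain ⟨i, hi⟩ := this
      refine ⟨i, le_antisymm ?_ (hnonneg i)⟩
      by_contra h
      push_neg at h
      exact hi ((hK i).mpr h)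
    have hi₁' : lam ≤ σsq * β i₁ * b := by
      have := hlam_le i₁
      simp only [hadef, hi₁] at this
      linarith
    have hbne : b ≠ 0 := by
      intro h
      rw [h] at hi₁'
      simp at hi₁'
      linarith
    -- sums over K
    set B : ℝ := ∑ j ∈ K, β j / δsq j with hB
    set C : ℝ := ∑ j ∈ K, β j ^ 2 / δsq j with hC
    clear_value B C
    have hCnn : 0 ≤ C := by
      rw [hC]
      apply Finset.sum_nonneg
      intro j _
      exact div_nonneg (sq_nonneg _) (hδ j).le
    -- w on active set
    have hwK : ∀ i ∈ K, w i = (lam - σsq * β i * b) / δsq i := by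
      intro i hi
      have hwi := (hK i).mp hi
      have h2 := hlam_active i hwi
      simp only [hadef] at h2
      rw [eq_div_iff (hδ i).ne']
      linear_combination h2
    -- b = lam * B - σsq * b * C
    have hbeq : b * (1 + σsq * C) = lam * B := by
      have h1 : b = ∑ j ∈ K, β j * w j := by
        rw [hbdef]
        rw [← Finset.sum_subset (Finset.subset_univ K)]
        intro x _ hx
        have : w x = 0 := by
          by_contra h
          exact hx ((hK x).mpr (lt_of_le_of_ne (hnonneg x) (Ne.symm h)))
        rw [this, mul_zero]
      have h2 : ∑ j ∈ K, β j * w j = lam * B - σsq * b * C := by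
        rw [Finset.sum_congr rfl fun j hj => by rw [hwK j hj]]
        have hterm : ∀ (δ L s b' β' : ℝ), δ ≠ 0 →
            β' * ((L - s * β' * b') / δ) = L * (β' / δ) - s * b' * (β' ^ 2 / δ) := by
          intro δ L s b' β' hδne
          field_simp
        have : ∀ j ∈ K, β j * ((lam - σsq * β j * b) / δsq j)
            = lam * (β j / δsq j) - σsq * b * (β j ^ 2 / δsq j) := by
          intro j hj
          exact hterm (δsq j) lam σsq b (β j) (hδ j).ne'
        rw [Finset.sum_congr rfl this, Finset.sum_sub_distrib, ← Finset.mul_sum, ← Finset.mul_sum,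
          ← hB, ← hC]
      rw [← h1] at h2
      linear_combination h2
    have h1C : 0 < 1 + σsq * C := by nlinarith
    -- b > 0
    have hbpos : 0 < b := by
      rcases lt_or_gt_of_ne hbne with hbneg | hbpos
      · exfalso
        have hBneg : B < 0 := by
          have : lam * B < 0 := by rw [← hbeq]; exact mul_neg_of_neg_of_pos hbneg h1C
          nlinarith
        have hKc : ∀ j, j ∉ K → β j / δsq j ≤ 0 := by
          intro j hj
          have hwj : ¬ (0 < w j) := fun h => hj ((hK j).mpr h)
          have : ¬ (σsq * β j * b < lam) := fun h => hwj ((hiff j).mpr h)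
          push_neg at this
          have hβj : β j < 0 := by
            by_contra hge
            push_neg at hge
            linarith [mul_nonneg (mul_nonneg hσ.le hge) (neg_nonneg.2 hbneg.le)]
          exact div_nonpos_of_nonpos_of_nonneg (le_of_lt hβj) (le_of_lt (hδ j))
        have hsplit : ∑ j, β j / δsq j = B + ∑ j ∈ Kᶜ, β j / δsq j := by
          rw [hB, ← Finset.sum_add_sum_compl K]
        have hcneg : ∑ j ∈ Kᶜ, β j / δsq j ≤ 0 := by
          apply Finset.sum_nonpos
          intro j hj
          exact hKc j (Finset.mem_compl.mp hj)
        linarith [hsign, hsplit ▸ hsign]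
      · exact hbpos
    have hBpos : 0 < B := by
      have : 0 < lam * B := by rw [← hbeq]; exact mul_pos hbpos h1C
      nlinarith
    -- K is the set of the first k indices
    have hKdc : ∀ i j : Fin p, i ≤ j → j ∈ K → i ∈ K := by
      intro i j hij hj
      rw [hK] at hj ⊢
      rw [hiff] at hj ⊢
      have h5 : σsq * β i * b ≤ σsq * β j * b :=
        mul_le_mul_of_nonneg_right (mul_le_mul_of_nonneg_left (hmono hij) hσ.le) hbpos.le
      linarith
    have hKset : K = Finset.univ.filter (fun j : Fin p => (j : ℕ) < k) := by
      ext j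
      simp only [Finset.mem_filter, Finset.mem_univ, true_and, hk]
      constructor
      · intro hj
        have hsub : Finset.Iic j ⊆ K := fun i hi => hKdc i j (Finset.mem_Iic.mp hi) hj
        have := Finset.card_le_card hsub
        rw [Fin.card_Iic] at this
        omega
      · intro hj
        by_contra hjK
        have hsub : K ⊆ Finset.Iio j := by
          intro i hi
          rw [Finset.mem_Iio]
          by_contra h
          push_neg at h
          exact hjK (hKdc j i h hi)
        have := Finset.card_le_card hsub
        rw [Fin.card_Iio] at this
        omega
    rw [← hKset, ← hB, ← hC]
    refine ⟨hBpos, ?_⟩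
    intro i
    rw [hiff i]
    have hthresh : (1 / σsq + C) / B = lam / (σsq * b) := by
      rw [div_eq_div_iff hBpos.ne' (mul_pos hσ hbpos).ne']
      field_simp
      nlinarith [hbeq]
    rw [hthresh]
    rw [lt_div_iff₀ (mul_pos hσ hbpos)]
    constructor
    · intro h; nlinarith
    · intro h; nlinarith
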